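/- Let A ∈ ℝ^{n×n} be symmetric positive definite, written as A = K Kᵀ with K = OΛ, where O is orthogonal and Λ is the diagonal matrix of square roots of the eigenvalues of A. For v ∈ C²(overline{Ω}) define ṽ(x) := v(Kx) on Ω̃ := K⁻¹Ω. Then for every x ∈ Ω̃: (i) Δṽ(x) = A : D²v(Kx), and (ii) |D²ṽ(x)|² ≥ ν(A)² |D²v(Kx)|², where ν(A) is the smallest eigenvalue of A. -/

import Mathlib

open MeasureTheory Filter Topology
open scoped BigOperators

noncomputable section

/-- `Euc n` is the Euclidean space `ℝⁿ`. -/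
abbrev Euc (n : ℕ) : Type := EuclideanSpace ℝ (Fin n)

/-- Squared Euclidean norm of a finite vector. -/
def vsq {m : ℕ} (v : Fin m → ℝ) : ℝ := ∑ i, (v i) ^ 2

/-- Squared Euclidean norm of a third order tensor `X ∈ ℝ^{N×n×n}`. -/
def tsq {N n : ℕ} (X : Fin N → Fin n → Fin n → ℝ) : ℝ :=
  ∑ α, ∑ i, ∑ j, (X α i j) ^ 2

/-- First partial derivative `D_i f`. -/
def pder {n : ℕ} (f : Euc n → ℝ) (i : Fin n) (x : Euc n) : ℝ :=
  fderiv ℝ f x (EuclideanSpace.single i 1)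

/-- Second partial derivative `D²_{ij} f`. -/
def pder2 {n : ℕ} (f : Euc n → ℝ) (i j : Fin n) (x : Euc n) : ℝ :=
  pder (fun y => pder f j y) i x

/-- Hessian tensor `D²u(x) ∈ ℝ^{Nn²}` of a vector valued map `u : ℝⁿ → ℝ^N`. -/
def Hess {n N : ℕ} (u : Euc n → Fin N → ℝ) (x : Euc n) : Fin N → Fin n → Fin n → ℝ :=
  fun α i j => pder2 (fun y => u y α) i j x

/-- The contraction `(𝐀:X)_α = Σ_{i,β,j} A_{αiβj} X_{βij}`. -/
def AC {n N : ℕ} (A : Fin N → Fin n → Fin N → Fin n → ℝ)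
    (X : Fin N → Fin n → Fin n → ℝ) : Fin N → ℝ :=
  fun α => ∑ i, ∑ β, ∑ j, A α i β j * X β i j

/-- The quadratic form `𝐀 : η⊗a⊗η⊗a = Σ A_{αiβj} η_α a_i η_β a_j`. -/
def QF {n N : ℕ} (A : Fin N → Fin n → Fin N → Fin n → ℝ)
    (η : Fin N → ℝ) (a : Fin n → ℝ) : ℝ :=
  ∑ α, ∑ i, ∑ β, ∑ j, A α i β j * η α * a i * η β * a j

/-- Symmetry `A_{αiβj} = A_{βjαi}` of a fourth order tensor (i.e. `𝐀 ∈ ℝ^{Nn×Nn}_s`). -/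
def SymT {n N : ℕ} (A : Fin N → Fin n → Fin N → Fin n → ℝ) : Prop :=
  ∀ α i β j, A α i β j = A β j α i

/-- Symmetry `X_{αij} = X_{αji}`, i.e. `X ∈ ℝ^{Nn²}_s`. -/
def SymX {n N : ℕ} (X : Fin N → Fin n → Fin n → ℝ) : Prop :=
  ∀ α i j, X α i j = X α j i

/-- `𝐀` is rank-one positive: `𝐀:η⊗a⊗η⊗a ≥ ν |η|²|a|²` for some `ν > 0`. -/
def RankOnePos {n N : ℕ} (A : Fin N → Fin n → Fin N → Fin n → ℝ) : Prop :=
  ∃ ν > (0:ℝ), ∀ (η : Fin N → ℝ) (a : Fin n → ℝ), ν * vsq η * vsq a ≤ QF A η a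

/-- The ellipticity constant `ν(𝐀) = min_{|η|=|a|=1} 𝐀:η⊗a⊗η⊗a`. -/
def nuA {n N : ℕ} (A : Fin N → Fin n → Fin N → Fin n → ℝ) : ℝ :=
  sInf {v | ∃ (η : Fin N → ℝ) (a : Fin n → ℝ), vsq η = 1 ∧ vsq a = 1 ∧ v = QF A η a}

/-- The smallest eigenvalue `λ₁(M) = min_{|a|=1} M:a⊗a` of a symmetric matrix. -/
def lam1 {m : ℕ} (M : Matrix (Fin m) (Fin m) ℝ) : ℝ :=
  sInf {v | ∃ a : Fin m → ℝ, vsq a = 1 ∧ v = ∑ i, ∑ j, M i j * a i * a j}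

/-- The structural hypothesis (SH) for `𝐀` with the decomposition data
`𝐀 = Σ_γ B^γ ⊗ A^γ` given explicitly. -/
def SHdata {n N : ℕ} (A : Fin N → Fin n → Fin N → Fin n → ℝ)
    (B : Fin N → Matrix (Fin N) (Fin N) ℝ)
    (M : Fin N → Matrix (Fin n) (Fin n) ℝ) : Prop :=
  (∀ γ, (B γ).IsSymm) ∧ (∀ γ, (M γ).IsSymm) ∧
  (∀ α i β j, A α i β j = ∑ γ, B γ α β * M γ i j) ∧
  (∀ γ δ, γ ≠ δ → ∀ y z : Fin N → ℝ, ∑ α, (B γ).mulVec y α * (B δ).mulVec z α = 0) ∧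
  (∑ γ, B γ).PosDef ∧ (∀ γ, (M γ).PosDef) ∧
  (∃ a : Fin n → ℝ, a ≠ 0 ∧ ∀ γ, (M γ).mulVec a = lam1 (M γ) • a)

/-- The structural hypothesis (SH). -/
def SH {n N : ℕ} (A : Fin N → Fin n → Fin N → Fin n → ℝ) : Prop :=
  ∃ B M, SHdata A B M

/-- `Ω` is a (bounded) domain with `C²` boundary, encoded via a `C²` defining function
with nonvanishing gradient on the boundary. -/
def IsC2Domain {n : ℕ} (Ω : Set (Euc n)) : Prop :=
  ∃ ρ : Euc n → ℝ, ContDiff ℝ 2 ρ ∧ Ω = {x | ρ x < 0} ∧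
    ∀ x ∈ frontier Ω, fderiv ℝ ρ x ≠ 0

/-- `F : Ω × ℝ^{Nn²}_s → ℝ^N` is a Carathéodory map: measurable in `x`, continuous in `X`. -/
def Caratheodory {n N : ℕ} (Ω : Set (Euc n))
    (F : Euc n → (Fin N → Fin n → Fin n → ℝ) → Fin N → ℝ) : Prop :=
  (∀ X, Measurable fun x => F x X) ∧
  (∀ᵐ x ∂(volume.restrict Ω), Continuous fun X => F x X)

/-- The K-condition (ellipticity) for `F` with data `(𝐀, α, β, γ)`. -/
def KCond {n N : ℕ} (Ω : Set (Euc n))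
    (F : Euc n → (Fin N → Fin n → Fin n → ℝ) → Fin N → ℝ)
    (A : Fin N → Fin n → Fin N → Fin n → ℝ)
    (al : Euc n → ℝ) (β γ : ℝ) : Prop :=
  SymT A ∧ RankOnePos A ∧ Measurable al ∧
  (∃ C : ℝ, ∀ᵐ x ∂(volume.restrict Ω), |al x| ≤ C) ∧
  (∀ᵐ x ∂(volume.restrict Ω), 0 < al x) ∧
  (∃ C : ℝ, ∀ᵐ x ∂(volume.restrict Ω), |1 / al x| ≤ C) ∧
  0 < β ∧ 0 < γ ∧ β + γ < 1 ∧
  (∀ᵐ x ∂(volume.restrict Ω), ∀ X Z : Fin N → Fin n → Fin n → ℝ, SymX X → SymX Z →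
    Real.sqrt (vsq fun α => AC A Z α - al x * (F x (X + Z) α - F x X α)) ≤
      β * nuA A * Real.sqrt (tsq Z) + γ * Real.sqrt (vsq (AC A Z)))

/-- Membership `u ∈ (H² ∩ H¹₀)(Ω)^N` (as a strong/classical object): twice
differentiable on `Ω`, with `u`, `Du`, `D²u` square integrable on `Ω`, and zero
boundary trace. -/
structure IsH2H10 {n N : ℕ} (Ω : Set (Euc n)) (u : Euc n → Fin N → ℝ) : Prop where
  contDiffOn : ∀ α, ContDiffOn ℝ 2 (fun x => u x α) Ω
  memL2 : IntegrableOn (fun x => vsq (u x)) Ω volume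
  grad_memL2 : IntegrableOn (fun x => ∑ α, ∑ i, (pder (fun y => u y α) i x) ^ 2) Ω volume
  hess_memL2 : IntegrableOn (fun x => tsq (Hess u x)) Ω volume
  zero_trace : ∀ x ∈ frontier Ω, Tendsto u (nhdsWithin x Ω) (nhds 0)

/-- The `L²(Ω)^N` norm of a vector valued map. -/
def L2V {n N : ℕ} (Ω : Set (Euc n)) (g : Euc n → Fin N → ℝ) : ℝ :=
  Real.sqrt (∫ x in Ω, vsq (g x))

/-- The `L²(Ω)` norm of a tensor valued map. -/
def L2T {n N : ℕ} (Ω : Set (Euc n)) (G : Euc n → Fin N → Fin n → Fin n → ℝ) : ℝ :=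
  Real.sqrt (∫ x in Ω, tsq (G x))

/-- The `H²(Ω)^N` norm `‖u‖_{L²} + ‖Du‖_{L²} + ‖D²u‖_{L²}`. -/
def H2norm {n N : ℕ} (Ω : Set (Euc n)) (u : Euc n → Fin N → ℝ) : ℝ :=
  L2V Ω u + Real.sqrt (∫ x in Ω, ∑ α, ∑ i, (pder (fun y => u y α) i x) ^ 2) +
    L2T Ω (fun x => Hess u x)

end

open Matrix

noncomputable section

/-- Reinterpret a coordinate vector as a point of Euclidean space. -/
def toE {n : ℕ} (v : Fin n → ℝ) : Euc n := (WithLp.equiv 2 (Fin n → ℝ)).symm v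

end

/-- Let `A = K Kᵀ` with `K = OΛ`, `O` orthogonal and
`Λ = diag(√λ₁,…,√λₙ)` the diagonal matrix of square roots of the eigenvalues of `A`
(listed increasingly). For `v ∈ C²(Ω̄)` define `ṽ(x) := v(Kx)` on `Ω̃ := K⁻¹Ω`. Then
for every `x ∈ Ω̃`: (i) `Δṽ(x) = A : D²v(Kx)`, and (ii)
`|D²ṽ(x)|² ≥ ν(A)² |D²v(Kx)|²`, where `ν(A) = λ₁` is the smallest eigenvalue. -/
lemma euc_sum_single {n : ℕ} (w : Euc n) :
    ∑ i, w i • (EuclideanSpace.single i (1:ℝ)) = w := by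
  have := (EuclideanSpace.basisFun (Fin n) ℝ).toBasis.sum_repr w
  simpa [EuclideanSpace.basisFun_apply] using this

lemma clm_eval_sum {n : ℕ} (T : Euc n →L[ℝ] ℝ) (w : Euc n) :
    T w = ∑ i, w i * T (EuclideanSpace.single i 1) := by
  conv_lhs => rw [← euc_sum_single w]
  rw [map_sum]
  simp

lemma frob_eq_trace {m : ℕ} (X : Matrix (Fin m) (Fin m) ℝ) :
    ∑ i, ∑ j, (X i j)^2 = Matrix.trace (Xᵀ * X) := by
  simp [Matrix.trace, Matrix.mul_apply, Matrix.diag, sq]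
  exact Finset.sum_comm

theorem transformed_laplacian_and_hessian
    {n : ℕ} (hn : 0 < n)
    (A O Λ K : Matrix (Fin n) (Fin n) ℝ)
    (lam : Fin n → ℝ) (hmono : Monotone lam) (hlampos : ∀ i, 0 < lam i)
    (hO : O * Oᵀ = 1)
    (hΛ : Λ = Matrix.diagonal fun i => Real.sqrt (lam i))
    (hK : K = O * Λ) (hA : A = K * Kᵀ)
    (hAdiag : A = O * Matrix.diagonal lam * Oᵀ)
    (Ω : Set (Euc n))
    (v : Euc n → ℝ)
    (hv : ∃ U : Set (Euc n), IsOpen U ∧ closure Ω ⊆ U ∧ ContDiffOn ℝ 2 v U)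
    (x : Euc n) (hx : toE (K.mulVec fun j => x j) ∈ Ω) :
    (∑ i, pder2 (fun y => v (toE (K.mulVec fun j => y j))) i i x =
      ∑ i, ∑ j, A i j * pder2 v i j (toE (K.mulVec fun j => x j))) ∧
    ((lam ⟨0, hn⟩) ^ 2 *
        ∑ i, ∑ j, (pder2 v i j (toE (K.mulVec fun j => x j))) ^ 2 ≤
      ∑ i, ∑ j, (pder2 (fun y => v (toE (K.mulVec fun j => y j))) i j x) ^ 2) := by
  classical
  obtain ⟨U, hUo, hUsub, hvC2⟩ := hv
  set L : Euc n →L[ℝ] Euc n := LinearMap.toContinuousLinearMap (Matrix.toEuclideanLin K)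
    with hLdef
  have hLapp : ∀ y : Euc n, L y = toE (K.mulVec fun j => y j) := fun _ => rfl
  set p : Euc n := toE (K.mulVec fun j => x j) with hp
  have hpL : L x = p := rfl
  have hpU : p ∈ U := hUsub (subset_closure hx)
  have hvAt : ∀ q ∈ U, ContDiffAt ℝ 2 v q := fun q hq => hvC2.contDiffAt (hUo.mem_nhds hq)
  have hdv : ∀ q ∈ U, DifferentiableAt ℝ v q := fun q hq =>
    (hvAt q hq).differentiableAt (by norm_num)
  have hdfv : DifferentiableAt ℝ (fderiv ℝ v) p :=
    ((hvAt p hpU).fderiv_right (m := 1) (by norm_num)).differentiableAt one_ne_zero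
  have hS : L ⁻¹' U ∈ nhds x := (hUo.preimage L.continuous).mem_nhds (by
    show L x ∈ U; rw [hpL]; exact hpU)
  have hLsingle : ∀ (j k : Fin n), (L (EuclideanSpace.single j (1:ℝ))) k = K k j := by
    intro j k
    show (toE (K.mulVec fun m => (EuclideanSpace.single j (1:ℝ)) m)) k = K k j
    simp [toE, Matrix.mulVec, dotProduct, EuclideanSpace.single_apply]
  -- first order chain rule, eventually
  have hev : ∀ j : Fin n, (fun y => pder (fun z => v (L z)) j y)
      =ᶠ[nhds x] fun y => ∑ k, K k j * pder v k (L y) := by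
    intro j
    filter_upwards [hS] with y hy
    have hdLy : DifferentiableAt ℝ v (L y) := hdv _ hy
    have hcomp : fderiv ℝ (fun z => v (L z)) y
        = (fderiv ℝ v (L y)).comp (L : Euc n →L[ℝ] Euc n) := by
      rw [show (fun z => v (L z)) = v ∘ L from rfl,
        fderiv_comp y hdLy L.differentiableAt, L.fderiv]
    show fderiv ℝ (fun z => v (L z)) y (EuclideanSpace.single j 1) = _
    rw [hcomp]
    simp only [ContinuousLinearMap.comp_apply]
    rw [clm_eval_sum (fderiv ℝ v (L y)) (L (EuclideanSpace.single j 1))]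
    exact Finset.sum_congr rfl fun k _ => by rw [hLsingle]; rfl
  -- the Hessian entries of v at p
  set H : Fin n → Fin n → ℝ :=
    fun l k => (fderiv ℝ (fderiv ℝ v) p (EuclideanSpace.single l 1))
      (EuclideanSpace.single k 1) with hHdef
  have hgdiff : ∀ k : Fin n, DifferentiableAt ℝ
      (fun q => (fderiv ℝ v q) (EuclideanSpace.single k (1:ℝ))) p :=
    fun k => hdfv.clm_apply (differentiableAt_const _)
  have hgfderiv : ∀ (k : Fin n) (w : Euc n),
      fderiv ℝ (fun q => (fderiv ℝ v q) (EuclideanSpace.single k (1:ℝ))) p w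
        = (fderiv ℝ (fderiv ℝ v) p w) (EuclideanSpace.single k 1) := by
    intro k w
    rw [fderiv_clm_apply hdfv (differentiableAt_const _)]
    simp
  have hvHess : ∀ l k, pder2 v l k p = H l k := by
    intro l k
    show fderiv ℝ (fun q => (fderiv ℝ v q) (EuclideanSpace.single k 1)) p
      (EuclideanSpace.single l 1) = _
    exact hgfderiv k _
  -- second order chain rule
  have htilde : ∀ i j, pder2 (fun y => v (L y)) i j x
      = ∑ k, ∑ l, K k j * (K l i * H l k) := by
    intro i j
    have h1 : pder2 (fun y => v (L y)) i j x
        = fderiv ℝ (fun y => ∑ k, K k j * pder v k (L y)) x (EuclideanSpace.single i 1) := by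
      show fderiv ℝ (fun y => pder (fun z => v (L z)) j y) x _ = _
      rw [(hev j).fderiv_eq]
    have hterm : ∀ k : Fin n, DifferentiableAt ℝ (fun y => pder v k (L y)) x := by
      intro k
      have h2 : DifferentiableAt ℝ
          (fun q => (fderiv ℝ v q) (EuclideanSpace.single k (1:ℝ))) (L x) := by
        rw [hpL]; exact hgdiff k
      exact h2.comp x L.differentiableAt
    have h3 : ∀ k : Fin n,
        fderiv ℝ (fun y => pder v k (L y)) x (EuclideanSpace.single i 1)
          = ∑ l, K l i * H l k := by
      intro k
      have h2 : DifferentiableAt ℝ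
          (fun q => (fderiv ℝ v q) (EuclideanSpace.single k (1:ℝ))) (L x) := by
        rw [hpL]; exact hgdiff k
      have hc : fderiv ℝ (fun y => pder v k (L y)) x
          = (fderiv ℝ (fun q => (fderiv ℝ v q) (EuclideanSpace.single k (1:ℝ))) (L x)).comp
            (L : Euc n →L[ℝ] Euc n) := by
        rw [show (fun y => pder v k (L y))
            = (fun q => (fderiv ℝ v q) (EuclideanSpace.single k (1:ℝ))) ∘ L from rfl,
          fderiv_comp x h2 L.differentiableAt, L.fderiv]
      rw [hc]
      simp only [ContinuousLinearMap.comp_apply]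
      rw [clm_eval_sum _ (L (EuclideanSpace.single i 1))]
      refine Finset.sum_congr rfl fun l _ => ?_
      rw [hLsingle, hpL, hgfderiv]
    rw [h1, fderiv_fun_sum (fun k _ => (hterm k).const_mul (K k j))]
    rw [ContinuousLinearMap.sum_apply]
    refine Finset.sum_congr rfl fun k _ => ?_
    rw [fderiv_const_mul (hterm k) (K k j)]
    rw [ContinuousLinearMap.smul_apply, smul_eq_mul, h3 k, Finset.mul_sum]
  constructor
  · -- part (i)
    show ∑ i, pder2 (fun y => v (L y)) i i x = ∑ i, ∑ j, A i j * pder2 v i j p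
    calc ∑ i, pder2 (fun y => v (L y)) i i x
        = ∑ i, ∑ k, ∑ l, K k i * (K l i * H l k) :=
          Finset.sum_congr rfl fun i _ => htilde i i
      _ = ∑ k, ∑ i, ∑ l, K k i * (K l i * H l k) := Finset.sum_comm
      _ = ∑ k, ∑ l, ∑ i, K k i * (K l i * H l k) :=
          Finset.sum_congr rfl fun k _ => Finset.sum_comm
      _ = ∑ k, ∑ l, A l k * H l k := by
          refine Finset.sum_congr rfl fun k _ => Finset.sum_congr rfl fun l _ => ?_
          rw [hA]
          simp only [Matrix.mul_apply, Matrix.transpose_apply, Finset.sum_mul]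
          exact Finset.sum_congr rfl fun i _ => by ring
      _ = ∑ l, ∑ k, A l k * H l k := Finset.sum_comm
      _ = ∑ i, ∑ j, A i j * pder2 v i j p := by
          refine Finset.sum_congr rfl fun l _ => Finset.sum_congr rfl fun k _ => ?_
          rw [hvHess l k]
  · -- part (ii)
    show (lam ⟨0, hn⟩) ^ 2 * ∑ i, ∑ j, (pder2 v i j p) ^ 2
        ≤ ∑ i, ∑ j, (pder2 (fun y => v (L y)) i j x) ^ 2
    set N : Fin n → Fin n → ℝ := fun i j => ∑ k, ∑ l, O l i * O k j * H l k with hNdef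
    have hK_entry : ∀ a b, K a b = O a b * Real.sqrt (lam b) := by
      intro a b; rw [hK, hΛ, Matrix.mul_diagonal]
    have hT : ∀ i j, pder2 (fun y => v (L y)) i j x
        = Real.sqrt (lam i) * Real.sqrt (lam j) * N i j := by
      intro i j
      rw [htilde i j, hNdef]
      simp only [Finset.mul_sum]
      refine Finset.sum_congr rfl fun k _ => Finset.sum_congr rfl fun l _ => ?_
      rw [hK_entry, hK_entry]; ring
    -- N is an orthogonal conjugate of H
    have hOO : Oᵀ * O = 1 := mul_eq_one_comm.mp hO
    set HM : Matrix (Fin n) (Fin n) ℝ := Matrix.of (fun l k => H l k) with hHM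
    have hNmat : ∀ i j, N i j = (Oᵀ * HM * O) i j := by
      intro i j
      rw [hNdef]
      simp only [Matrix.mul_apply, Matrix.transpose_apply, Finset.sum_mul, hHM, Matrix.of_apply]
      exact Finset.sum_congr rfl fun k _ => Finset.sum_congr rfl fun l _ => by ring
    have hfrob : ∑ i, ∑ j, (N i j) ^ 2 = ∑ i, ∑ j, (H i j) ^ 2 := by
      have key : ∀ X : Matrix (Fin n) (Fin n) ℝ, O * (Oᵀ * X) = X := fun X => by
        rw [← Matrix.mul_assoc, hO, Matrix.one_mul]
      have hprod : (Oᵀ * HM * O)ᵀ * (Oᵀ * HM * O) = Oᵀ * (HMᵀ * (HM * O)) := by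
        rw [Matrix.transpose_mul, Matrix.transpose_mul, Matrix.transpose_transpose]
        simp only [Matrix.mul_assoc]
        rw [key]
      have htr : Matrix.trace ((Oᵀ * HM * O)ᵀ * (Oᵀ * HM * O)) = Matrix.trace (HMᵀ * HM) := by
        rw [hprod, Matrix.trace_mul_comm]
        simp only [Matrix.mul_assoc]
        rw [hO, Matrix.mul_one]
      calc ∑ i, ∑ j, (N i j) ^ 2
          = ∑ i, ∑ j, ((Oᵀ * HM * O) i j) ^ 2 :=
            Finset.sum_congr rfl fun i _ => Finset.sum_congr rfl fun j _ => by rw [hNmat]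
        _ = Matrix.trace (HMᵀ * HM) := by rw [frob_eq_trace]; exact htr
        _ = ∑ i, ∑ j, (H i j) ^ 2 := (frob_eq_trace HM).symm
    have hlam0 : ∀ i, lam ⟨0, hn⟩ ≤ lam i := fun i => hmono (by
      simp [Fin.le_def])
    have hstep : (lam ⟨0, hn⟩) ^ 2 * ∑ i, ∑ j, (N i j) ^ 2
        ≤ ∑ i, ∑ j, lam i * lam j * (N i j) ^ 2 := by
      rw [Finset.mul_sum]
      refine Finset.sum_le_sum fun i _ => ?_
      rw [Finset.mul_sum]
      refine Finset.sum_le_sum fun j _ => ?_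
      have h1 : (lam ⟨0, hn⟩) ^ 2 ≤ lam i * lam j := by
        rw [sq]
        exact mul_le_mul (hlam0 i) (hlam0 j) (hlampos _).le (hlampos i).le
      exact mul_le_mul_of_nonneg_right h1 (sq_nonneg _)
    calc (lam ⟨0, hn⟩) ^ 2 * ∑ i, ∑ j, (pder2 v i j p) ^ 2
        = (lam ⟨0, hn⟩) ^ 2 * ∑ i, ∑ j, (H i j) ^ 2 := by
          congr 1
          exact Finset.sum_congr rfl fun i _ => Finset.sum_congr rfl fun j _ => by
            rw [hvHess]
      _ = (lam ⟨0, hn⟩) ^ 2 * ∑ i, ∑ j, (N i j) ^ 2 := by rw [hfrob]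
      _ ≤ ∑ i, ∑ j, lam i * lam j * (N i j) ^ 2 := hstep
      _ = ∑ i, ∑ j, (pder2 (fun y => v (L y)) i j x) ^ 2 := by
          refine Finset.sum_congr rfl fun i _ => Finset.sum_congr rfl fun j _ => ?_
          rw [hT]
          rw [mul_pow, mul_pow, Real.sq_sqrt (hlampos i).le, Real.sq_sqrt (hlampos j).le]
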